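/- Jet lemma for holomorphic deformations (abstract form of the flow lemma): Let n ≥ 1 and k ≥ 0 be integers. Let W ⊆ ℂ × ℂ^n be an open set containing {0} × ℂ^n and let φ : W → ℂ^n be holomorphic (complex analytic) with φ(0, z) = z for all z ∈ ℂ^n. Let U ⊆ ℂ be open, let f : U → ℂ^n and h : U → ℂ be holomorphic, let p ∈ U, and suppose that h has a zero of multiplicity at least k + 1 at p. Then there is an open neighborhood U′ ⊆ U of p such that (h(q), f(q)) ∈ W for all q ∈ U′, and the holomorphic map f̃ : U′ → ℂ^n defined by f̃(q) = φ(h(q), f(q)) satisfies: f̃ − f has a zero of multiplicity at least k + 1 at p (i.e. f̃ and f have the same k-jet at p). -/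

import Mathlib

open Set Metric

noncomputable section

/-- `Λ` is a closed discrete subset of `U`: it is contained in `U`, closed in the
subspace topology of `U`, and every point of `Λ` is isolated in `Λ`. -/
def ClosedDiscreteIn (Λ U : Set ℂ) : Prop :=
  Λ ⊆ U ∧ closure Λ ∩ U ⊆ Λ ∧ ∀ p ∈ Λ, ∃ V : Set ℂ, IsOpen V ∧ p ∈ V ∧ V ∩ Λ = {p}

/-- Partial derivative of `X` with respect to the real coordinate `x` (direction `1`). -/
def Xx (n : ℕ) (X : ℂ → EuclideanSpace ℝ (Fin n)) (z : ℂ) : EuclideanSpace ℝ (Fin n) :=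
  fderiv ℝ X z 1

/-- Partial derivative of `X` with respect to the real coordinate `y` (direction `i`). -/
def Xy (n : ℕ) (X : ℂ → EuclideanSpace ℝ (Fin n)) (z : ℂ) : EuclideanSpace ℝ (Fin n) :=
  fderiv ℝ X z Complex.I

/-- `X : U → ℝⁿ` is a conformal minimal immersion: it is smooth on `U`,
`‖X_x‖ = ‖X_y‖ ≠ 0`, `⟨X_x, X_y⟩ = 0`, and `X` is harmonic (`X_xx + X_yy = 0`) on `U`. -/
def IsConformalMinimalOn (n : ℕ) (X : ℂ → EuclideanSpace ℝ (Fin n)) (U : Set ℂ) : Prop :=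
  ContDiffOn ℝ ⊤ X U ∧
  (∀ z ∈ U, ‖Xx n X z‖ = ‖Xy n X z‖ ∧ Xx n X z ≠ 0 ∧
    (inner ℝ (Xx n X z) (Xy n X z) : ℝ) = 0) ∧
  (∀ z ∈ U, fderiv ℝ (Xx n X) z 1 + fderiv ℝ (Xy n X) z Complex.I = 0)

/-- `∂X = (X_x - i X_y)/2`, componentwise, with values in `ℂⁿ`. -/
def partialCM (n : ℕ) (X : ℂ → EuclideanSpace ℝ (Fin n)) (z : ℂ) : Fin n → ℂ :=
  fun j => ((Xx n X z j : ℂ) - Complex.I * (Xy n X z j : ℂ)) / 2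

/-- `g` has a zero of multiplicity at least `k` at `p`: near `p`,
`g z = (z - p)^k • h z` with `h` holomorphic. -/
def ZeroOfMultAtLeast {E : Type*} [NormedAddCommGroup E] [NormedSpace ℂ E]
    (g : ℂ → E) (p : ℂ) (k : ℕ) : Prop :=
  ∃ (V : Set ℂ) (h : ℂ → E), IsOpen V ∧ p ∈ V ∧ DifferentiableOn ℂ h V ∧
    ∀ z ∈ V, g z = (z - p) ^ k • h z

/-- `F` is a complete immersed map on `U`: for every continuous proper path
`γ : [0,1) → U` the total variation of `F ∘ γ` is infinite. -/
def IsCompleteMap {E : Type*} [NormedAddCommGroup E] (F : ℂ → E) (U : Set ℂ) : Prop :=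
  ∀ γ : ℝ → ℂ, ContinuousOn γ (Set.Ico 0 1) → (∀ t ∈ Set.Ico (0:ℝ) 1, γ t ∈ U) →
    (∀ C : Set ℂ, C ⊆ U → IsCompact C →
      ∃ t₀ ∈ Set.Ico (0:ℝ) 1, ∀ t ∈ Set.Ico (0:ℝ) 1, t₀ ≤ t → γ t ∉ C) →
    eVariationOn (F ∘ γ) (Set.Ico 0 1) = ⊤

/-- The null quadric `𝔄 = {z ∈ ℂⁿ : z₁² + ⋯ + zₙ² = 0}`. -/
def nullQuadric (n : ℕ) : Set (Fin n → ℂ) := {z | ∑ j, (z j) ^ 2 = 0}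

/-- The punctured null quadric `𝔄∗ = 𝔄 ∖ {0}`. -/
def nullQuadricStar (n : ℕ) : Set (Fin n → ℂ) := nullQuadric n \ {0}

/-- `F : U → ℂⁿ` is a null holomorphic curve: holomorphic with `F'(z) ∈ 𝔄∗` on `U`. -/
def IsNullCurveOn (n : ℕ) (F : ℂ → Fin n → ℂ) (U : Set ℂ) : Prop :=
  DifferentiableOn ℂ F U ∧ ∀ z ∈ U, deriv F z ∈ nullQuadricStar n

/-- `f` is flat on `s`: all values of `f` on `s` lie on a single complex line `ℂ·z₀`. -/
def FlatOn {α : Type*} (n : ℕ) (f : α → Fin n → ℂ) (s : Set α) : Prop :=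
  ∃ z₀ : Fin n → ℂ, ∀ q ∈ s, ∃ ζ : ℂ, f q = ζ • z₀

set_option maxHeartbeats 1000000 in
/-- Jet lemma for holomorphic deformations (abstract form of the
flow lemma). -/
theorem jet_lemma_holomorphic_deformation
    (n k : ℕ) (hn : 1 ≤ n)
    (W : Set (ℂ × (Fin n → ℂ))) (hWopen : IsOpen W)
    (hW0 : ∀ z : Fin n → ℂ, ((0 : ℂ), z) ∈ W)
    (φ : ℂ × (Fin n → ℂ) → Fin n → ℂ) (hφ : DifferentiableOn ℂ φ W)
    (hφ0 : ∀ z : Fin n → ℂ, φ (0, z) = z)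
    (U : Set ℂ) (hU : IsOpen U)
    (f : ℂ → Fin n → ℂ) (hf : DifferentiableOn ℂ f U)
    (h : ℂ → ℂ) (hh : DifferentiableOn ℂ h U)
    (p : ℂ) (hp : p ∈ U)
    (hz : ZeroOfMultAtLeast h p (k + 1)) :
    ∃ U' : Set ℂ, IsOpen U' ∧ p ∈ U' ∧ U' ⊆ U ∧
      (∀ q ∈ U', (h q, f q) ∈ W) ∧
      ZeroOfMultAtLeast (fun q => φ (h q, f q) - f q) p (k + 1) := by
  classical
  obtain ⟨V₀, η, hV₀open, hpV₀, hηdiff, hηeq⟩ := hz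
  set z₀ : Fin n → ℂ := f p with hz₀
  -- h p = 0
  have hhp : h p = 0 := by
    have := hηeq p hpV₀; simpa using this
  -- Φ = φ - snd
  set Φ : ℂ × (Fin n → ℂ) → Fin n → ℂ := fun w => φ w - w.2 with hΦdef
  have hΦdiff : DifferentiableOn ℂ Φ W :=
    hφ.sub (differentiable_snd.differentiableOn)
  have hΦ0 : ∀ z : Fin n → ℂ, Φ (0, z) = 0 := by
    intro z; simp [hΦdef, hφ0 z]
  -- choose r with closedBall around (0,z₀) inside W
  obtain ⟨r, hr0, hrW⟩ : ∃ r > 0, closedBall ((0 : ℂ), z₀) r ⊆ W := by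
    rcases Metric.isOpen_iff.1 hWopen _ (hW0 z₀) with ⟨ε, hε, hball⟩
    exact ⟨ε / 2, by positivity, (closedBall_subset_ball (by linarith)).trans hball⟩
  have hKsub : closedBall (0 : ℂ) r ×ˢ closedBall z₀ r ⊆ W := by
    rw [closedBall_prod_same]; exact hrW
  -- bound for Φ on the compact set
  obtain ⟨M, hM⟩ : ∃ M, ∀ w ∈ closedBall ((0 : ℂ), z₀) r, ‖Φ w‖ ≤ M := by
    have hc : IsCompact (closedBall ((0 : ℂ), z₀) r) := isCompact_closedBall _ _
    exact hc.exists_bound_of_continuousOn ((hΦdiff.continuousOn).mono hrW)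
  have hM0 : 0 ≤ M := le_trans (norm_nonneg _) (hM _ (mem_closedBall_self hr0.le))
  set R₂ : ℝ := M + 1 with hR₂
  have hR₂0 : 0 < R₂ := by positivity
  -- Schwarz-type estimate
  have hSchwarz : ∀ z ∈ closedBall z₀ r, ∀ t ∈ ball (0 : ℂ) r, ‖Φ (t, z)‖ ≤ R₂ / r * ‖t‖ := by
    intro z hzc t ht
    have hdiff : DifferentiableOn ℂ (fun t : ℂ => Φ (t, z)) (ball 0 r) := by
      apply hΦdiff.comp ((differentiable_id.prodMk (differentiable_const z)).differentiableOn)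
      intro s hs
      exact hKsub ⟨ball_subset_closedBall hs, hzc⟩
    have hmaps : MapsTo (fun t : ℂ => Φ (t, z)) (ball 0 r) (ball ((fun t : ℂ => Φ (t, z)) 0) R₂) := by
      intro s hs
      have : ‖Φ (s, z)‖ ≤ M := by
        apply hM
        rw [← closedBall_prod_same]
        exact ⟨ball_subset_closedBall hs, hzc⟩
      simp only [hΦ0 z, mem_ball, dist_zero_right]
      linarith
    have := Complex.dist_le_div_mul_dist_of_mapsTo_ball hdiff (hmaps.mono_right ball_subset_closedBall) ht
    simpa [hΦ0 z, dist_zero_right, dist_eq_norm] using this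
  -- the open neighborhood
  set V : Set ℂ := (U ∩ h ⁻¹' ball (0 : ℂ) r) ∩ (U ∩ f ⁻¹' ball z₀ r) ∩
      (V₀ ∩ η ⁻¹' ball (η p) 1) with hVdef
  have hVopen : IsOpen V :=
    (((hh.continuousOn).isOpen_inter_preimage hU isOpen_ball).inter
      ((hf.continuousOn).isOpen_inter_preimage hU isOpen_ball)).inter
      ((hηdiff.continuousOn).isOpen_inter_preimage hV₀open isOpen_ball)
  have hpV : p ∈ V := by
    refine ⟨⟨⟨hp, ?_⟩, ⟨hp, ?_⟩⟩, hpV₀, ?_⟩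
    · simp [hhp, hr0]
    · simp [hz₀, hr0]
    · simp
  have hVU : V ⊆ U := fun q hq => hq.1.1.1
  have hVV₀ : V ⊆ V₀ := fun q hq => hq.2.1
  have hVW : ∀ q ∈ V, (h q, f q) ∈ W := by
    intro q hq
    apply hKsub
    exact ⟨ball_subset_closedBall hq.1.1.2, ball_subset_closedBall hq.1.2.2⟩
  set g : ℂ → Fin n → ℂ := fun q => φ (h q, f q) - f q with hgdef
  have hgeq : ∀ q, g q = Φ (h q, f q) := fun q => rfl
  have hgp : g p = 0 := by
    simp [hgdef, hhp, hφ0 (f p)]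
  have hgdiff : DifferentiableOn ℂ g V := by
    apply DifferentiableOn.sub _ (hf.mono hVU)
    exact hφ.comp (((hh.mono hVU).prodMk (hf.mono hVU))) hVW
  -- key bound
  set C : ℝ := R₂ / r * (‖η p‖ + 1) with hC
  have hC0 : 0 ≤ C := by positivity
  have hbound : ∀ q ∈ V, ‖g q‖ ≤ C * ‖q - p‖ ^ (k + 1) := by
    intro q hq
    have h1 : ‖g q‖ ≤ R₂ / r * ‖h q‖ := by
      rw [hgeq]
      exact hSchwarz (f q) (ball_subset_closedBall hq.1.2.2) (h q) hq.1.1.2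
    have h2 : ‖h q‖ ≤ (‖η p‖ + 1) * ‖q - p‖ ^ (k + 1) := by
      rw [hηeq q (hVV₀ hq)]
      have hη : ‖η q‖ ≤ ‖η p‖ + 1 := by
        have := hq.2.2
        rw [mem_preimage, mem_ball, dist_eq_norm] at this
        have := norm_sub_norm_le (η q) (η p)
        linarith
      calc ‖(q - p) ^ (k + 1) • η q‖ = ‖q - p‖ ^ (k + 1) * ‖η q‖ := by
            rw [norm_smul, norm_pow]
        _ ≤ (‖η p‖ + 1) * ‖q - p‖ ^ (k + 1) := by
            rw [mul_comm]
            gcongr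
      
    calc ‖g q‖ ≤ R₂ / r * ‖h q‖ := h1
      _ ≤ R₂ / r * ((‖η p‖ + 1) * ‖q - p‖ ^ (k + 1)) := by
          gcongr
      _ = C * ‖q - p‖ ^ (k + 1) := by rw [hC]; ring
  -- iterated dslope
  set gj : ℕ → (ℂ → Fin n → ℂ) := fun j => (Function.swap dslope p)^[j] g with hgj
  have hgjsucc : ∀ j, gj (j + 1) = dslope (gj j) p := by
    intro j
    rw [hgj]
    simp [Function.iterate_succ_apply', Function.swap]
  have hVnhds : V ∈ nhds p := hVopen.mem_nhds hpV
  have hNB : (nhdsWithin p (V \ {p})).NeBot := by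
    have : nhdsWithin p ({p}ᶜ : Set ℂ) = nhdsWithin p (V \ {p}) := by
      rw [nhdsWithin_restrict' ({p}ᶜ : Set ℂ) hVnhds]
      congr 1
      ext x; simp [and_comm]
    rw [← this]
    infer_instance
  have key : ∀ j, j ≤ k + 1 → DifferentiableOn ℂ (gj j) V ∧
      ∀ q ∈ V, q ≠ p → (q - p) ^ j • gj j q = g q := by
    intro j
    induction j with
    | zero =>
      intro _
      refine ⟨by simpa [hgj] using hgdiff, fun q _ _ => by simp [hgj]⟩
    | succ j ih =>
      intro hj
      obtain ⟨hdiff, hform⟩ := ih (by omega)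
      -- gj j p = 0
      have hzero : gj j p = 0 := by
        have hcont : Filter.Tendsto (gj j) (nhdsWithin p (V \ {p})) (nhds (gj j p)) :=
          ((hdiff.differentiableAt hVnhds).continuousAt).continuousWithinAt.tendsto
      
        have hbd : ∀ q ∈ V \ {p}, ‖gj j q‖ ≤ C * ‖q - p‖ ^ (k + 1 - j) := by
          intro q hq
          have hqp : q ≠ p := hq.2
          have hne : (q - p) ≠ 0 := sub_ne_zero.2 hqp
          have heq := hform q hq.1 hqp
          have : ‖q - p‖ ^ j * ‖gj j q‖ = ‖g q‖ := by
            rw [← heq, norm_smul, norm_pow]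
          have hpos : (0:ℝ) < ‖q - p‖ ^ j := pow_pos (norm_pos_iff.mpr hne) j
          have hsplit : (k + 1) = (k + 1 - j) + j := by omega
          have := hbound q hq.1
          rw [← ‹‖q - p‖ ^ j * ‖gj j q‖ = ‖g q‖›] at this
          rw [hsplit, pow_add] at this
          refine le_of_mul_le_mul_right ?_ hpos
          calc ‖gj j q‖ * ‖q - p‖ ^ j = ‖q - p‖ ^ j * ‖gj j q‖ := mul_comm _ _
            _ ≤ C * (‖q - p‖ ^ (k + 1 - j) * ‖q - p‖ ^ j) := this
            _ = C * ‖q - p‖ ^ (k + 1 - j) * ‖q - p‖ ^ j := (mul_assoc _ _ _).symm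
        have hzt : Filter.Tendsto (fun q : ℂ => C * ‖q - p‖ ^ (k + 1 - j))
            (nhdsWithin p (V \ {p})) (nhds 0) := by
          have hc : Continuous (fun q : ℂ => C * ‖q - p‖ ^ (k + 1 - j)) :=
            continuous_const.mul ((continuous_id.sub continuous_const).norm.pow _)
          have h0 : C * ‖p - p‖ ^ (k + 1 - j) = 0 := by
            have : k + 1 - j ≠ 0 := by omega
            simp [this]
          have := hc.tendsto p
          rw [h0] at this
          exact this.mono_left nhdsWithin_le_nhds
        have h2 : Filter.Tendsto (gj j) (nhdsWithin p (V \ {p})) (nhds 0) := by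
          apply squeeze_zero_norm' _ hzt
          filter_upwards [self_mem_nhdsWithin] with q hq
          exact hbd q hq
        exact tendsto_nhds_unique hcont h2
      constructor
      · rw [hgjsucc]
        exact (Complex.differentiableOn_dslope hVnhds).mpr hdiff
      · intro q hq hqp
        have hne : (q - p) ≠ 0 := sub_ne_zero.2 hqp
        have hds : gj (j + 1) q = (q - p)⁻¹ • gj j q := by
          rw [hgjsucc, dslope_of_ne _ hqp, slope_def_module, hzero, sub_zero]
        rw [hds, smul_smul, ← hform q hq hqp]
        congr 1
        rw [pow_succ]
        field_simp
  obtain ⟨hHdiff, hHform⟩ := key (k + 1) le_rfl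
  refine ⟨V, hVopen, hpV, hVU, hVW, V, gj (k + 1), hVopen, hpV, hHdiff, ?_⟩
  intro q hq
  rcases eq_or_ne q p with rfl | hqp
  · have h0 : ((q : ℂ) - q) ^ (k + 1) • gj (k + 1) q = 0 := by simp
    rw [h0]
    exact hgp
  · exact (hHform q hq hqp).symm
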